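/- Let M = [[4,0],[1,3]] and D = {(0,0), (1,0), (0,1)} ⊂ ℤ², S = {(0,0), (2,2), (3,1)} ⊂ ℤ². Then the 3×3 matrix H = (1/√3)·(e^{2πi ⟨M⁻¹d, s⟩})_{d∈D, s∈S} is unitary; i.e., (M, D, S) is a Hadamard triple. -/

import Mathlib

open Matrix Complex Real

lemma stmt_13_aux_ne : Complex.exp (2 * Real.pi * Complex.I * (3⁻¹ : ℂ)) ≠ 1 := by
  intro h
  rw [Complex.exp_eq_one_iff] at h
  obtain ⟨n, hn⟩ := h
  have hpi : (Real.pi : ℂ) ≠ 0 := by exact_mod_cast Real.pi_ne_zero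
  have hne : (2 * (Real.pi : ℂ) * Complex.I) ≠ 0 := by
    simp [hpi, Complex.I_ne_zero]
  have key : ((n : ℂ) * 3) * (2 * Real.pi * Complex.I) = 1 * (2 * Real.pi * Complex.I) := by
    linear_combination -3 * hn
  have h3 : (n : ℂ) * 3 = 1 := mul_right_cancel₀ hne key
  have : (n : ℤ) * 3 = 1 := by exact_mod_cast h3
  omega

set_option maxHeartbeats 1000000 in
theorem stmt_13 (M : Matrix (Fin 2) (Fin 2) ℚ) (hM : M = !![4, 0; 1, 3])
    (D S : Fin 3 → Fin 2 → ℚ)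
    (hD : D = ![![0, 0], ![1, 0], ![0, 1]])
    (hS : S = ![![0, 0], ![2, 2], ![3, 1]])
    (H : Matrix (Fin 3) (Fin 3) ℂ)
    (hH : H = fun i j => (1 / Real.sqrt 3 : ℂ) *
      Complex.exp (2 * Real.pi * Complex.I *
        ((M⁻¹.mulVec (D i) ⬝ᵥ S j : ℚ) : ℂ))) :
    Hᴴ * H = 1 := by
  have hinv : M⁻¹ = !![1/4, 0; -1/12, 1/3] := by
    apply Matrix.inv_eq_right_inv
    rw [hM, show (1 : Matrix (Fin 2) (Fin 2) ℚ) = !![1,0;0,1] by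
      ext i j; fin_cases i <;> fin_cases j <;> simp]
    norm_num [Matrix.mul_fin_two]
  have hq : ∀ i j, (M⁻¹.mulVec (D i) ⬝ᵥ S j : ℚ) = !![0,0,0; 0,1/3,2/3; 0,2/3,1/3] i j := by
    subst hD hS
    intro i j
    fin_cases i <;> fin_cases j <;>
      norm_num [hinv, Matrix.mulVec, dotProduct, Fin.sum_univ_two]
  have hH' : H = fun i j => (1 / Real.sqrt 3 : ℂ) *
      Complex.exp (2 * Real.pi * Complex.I *
        ((!![0,0,0; 0,1/3,2/3; 0,2/3,1/3] i j : ℚ) : ℂ)) := by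
    rw [hH]; funext i j; rw [hq]
  clear hH hq hinv hM
  subst hH'
  -- abbreviations
  set A : ℂ := Complex.exp (2 * Real.pi * Complex.I * (3⁻¹ : ℂ)) with hA_def
  set B : ℂ := Complex.exp (2 * Real.pi * Complex.I * ((2/3 : ℂ))) with hB_def
  have hAB : A * B = 1 := by
    rw [hA_def, hB_def, ← Complex.exp_add,
      show (2 * (Real.pi : ℂ) * Complex.I * 3⁻¹ + 2 * Real.pi * Complex.I * (2/3))
        = 2 * Real.pi * Complex.I by ring, Complex.exp_two_pi_mul_I]
  have hB2 : B = A ^ 2 := by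
    rw [hA_def, hB_def, ← Complex.exp_nat_mul]
    congr 1
    push_cast
    ring
  have hA3 : A ^ 3 = 1 := by
    calc A ^ 3 = A * B := by rw [hB2]; ring
    _ = 1 := hAB
  have hsum : 1 + A + B = 0 := by
    have h : (A - 1) * (1 + A + A ^ 2) = 0 := by linear_combination hA3
    rcases mul_eq_zero.1 h with h1 | h2
    · exact absurd (sub_eq_zero.mp h1) stmt_13_aux_ne
    · rw [hB2]; linear_combination h2
  have hA' : Complex.exp (-(2 * (Real.pi : ℂ) * Complex.I * 3⁻¹)) = B := by
    rw [hB_def]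
    calc Complex.exp (-(2 * (Real.pi : ℂ) * Complex.I * 3⁻¹))
        = Complex.exp (-(2 * (Real.pi : ℂ) * Complex.I * 3⁻¹)) *
            Complex.exp (2 * Real.pi * Complex.I) := by
          rw [Complex.exp_two_pi_mul_I, mul_one]
      _ = Complex.exp (2 * Real.pi * Complex.I * (2/3)) := by
          rw [← Complex.exp_add]; congr 1; ring
  have hB' : Complex.exp (-(2 * (Real.pi : ℂ) * Complex.I * (2/3))) = A := by
    rw [hA_def]
    calc Complex.exp (-(2 * (Real.pi : ℂ) * Complex.I * (2/3)))
        = Complex.exp (-(2 * (Real.pi : ℂ) * Complex.I * (2/3))) *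
            Complex.exp (2 * Real.pi * Complex.I) := by
          rw [Complex.exp_two_pi_mul_I, mul_one]
      _ = Complex.exp (2 * Real.pi * Complex.I * 3⁻¹) := by
          rw [← Complex.exp_add]; congr 1; ring
  have hs : (((Real.sqrt 3 : ℝ) : ℂ))⁻¹ * (((Real.sqrt 3 : ℝ) : ℂ))⁻¹ = 3⁻¹ := by
    rw [← mul_inv]
    have h33 : ((Real.sqrt 3 : ℝ) : ℂ) * ((Real.sqrt 3 : ℝ) : ℂ) = 3 := by
      norm_cast
      exact Real.mul_self_sqrt (by norm_num)
    rw [h33]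
  have hAc : (starRingEnd ℂ) A = B := by
    rw [hA_def, ← Complex.exp_conj, ← hA']; congr 1; simp [Complex.conj_ofReal, Complex.conj_I, map_ofNat]
  have hBc : (starRingEnd ℂ) B = A := by
    rw [hB_def, ← Complex.exp_conj, ← hB']; congr 1; simp [Complex.conj_ofReal, Complex.conj_I, map_ofNat]
  ext i j
  erw [Matrix.mul_apply, Fin.sum_univ_three, Matrix.conjTranspose_apply, Matrix.conjTranspose_apply,
    Matrix.conjTranspose_apply]
  fin_cases i <;> fin_cases j <;>
    simp [Matrix.mul_apply, Matrix.conjTranspose_apply, Fin.sum_univ_three, Matrix.one_apply,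
      ← Complex.exp_conj, _root_.map_mul, map_ofNat, Complex.conj_ofReal, Complex.conj_I,
      ← Complex.exp_add, ← hA_def, ← hB_def, hA', hB', hAc, hBc]
  · linear_combination 3 * hs
  · linear_combination (1 + A + B) * hs + (3⁻¹ : ℂ) * hsum
  · linear_combination (1 + A + B) * hs + (3⁻¹ : ℂ) * hsum
  · linear_combination (1 + A + B) * hs + (3⁻¹ : ℂ) * hsum
  · linear_combination (1 + 2*A*B) * hs + (2/3 : ℂ) * hAB
  · linear_combination (1 + A^2 + B^2) * hs + (3⁻¹ : ℂ) * (A + B - 1) * hsum - (2/3 : ℂ) * hAB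
  · linear_combination (1 + A + B) * hs + (3⁻¹ : ℂ) * hsum
  · linear_combination (1 + A^2 + B^2) * hs + (3⁻¹ : ℂ) * (A + B - 1) * hsum - (2/3 : ℂ) * hAB
  · linear_combination (1 + 2*A*B) * hs + (2/3 : ℂ) * hAB
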